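/- If there exists a tight (3,3)-design in F_2^n (n ≥ 6), i.e. a (3,3)-design of cardinality ∑_{i=0}^3 C(n−1,i) = n(n² − 3n + 8)/6, then n ≡ 8 (mod 16) or n ≡ 107 (mod 128), and 3n − 8 = m² for some positive integer m ≥ 4 which either is divisible by 4 and not divisible by 3, or satisfies m ≡ 43 (mod 64). -/

import Mathlib

set_option maxHeartbeats 1000000


open Finset

/-- The Krawtchouk polynomials `Q_i^{(n)}(t)`, determined by `Q_0 = 1`, `Q_1 = t` and the
three-term recurrence `n·t·Q_i(t) = (n−i)·Q_{i+1}(t) + i·Q_{i−1}(t)`. -/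
noncomputable def kraw (n : ℕ) : ℕ → ℝ → ℝ
  | 0, _ => 1
  | 1, t => t
  | (i+2), t =>
      ((n : ℝ) * t * kraw n (i+1) t - ((i : ℝ) + 1) * kraw n i t) / ((n : ℝ) - ((i : ℝ) + 1))

/-- The "inner product" `⟨x,y⟩ = 1 − 2 d(x,y)/n`. -/
noncomputable def ip (n : ℕ) (x y : Fin n → ZMod 2) : ℝ :=
  1 - 2 * (hammingDist x y : ℝ) / (n : ℝ)

/-- The `i`-th moment `M_i(C) = ∑_{x,y ∈ C} Q_i^{(n)}(⟨x,y⟩)`. -/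
noncomputable def moment (n : ℕ) (C : Finset (Fin n → ZMod 2)) (i : ℕ) : ℝ :=
  ∑ x ∈ C, ∑ y ∈ C, kraw n i (ip n x y)

/-- The antipodal (complement) point `−x`. -/
def antip {n : ℕ} (x : Fin n → ZMod 2) : Fin n → ZMod 2 := fun j => x j + 1

/-- `C` is a `(k,k)`-design: a nonempty code with `M_i(C) = 0` for all even `i` with `2 ≤ i ≤ 2k`. -/
def IsKKDesign (n k : ℕ) (C : Finset (Fin n → ZMod 2)) : Prop :=
  C.Nonempty ∧ ∀ j : ℕ, 1 ≤ j → j ≤ k → moment n C (2 * j) = 0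

/-- `C` is an `m`-design: a nonempty code with `M_i(C) = 0` for all `1 ≤ i ≤ m`. -/
def IsMDesign (n m : ℕ) (C : Finset (Fin n → ZMod 2)) : Prop :=
  C.Nonempty ∧ ∀ i : ℕ, 1 ≤ i → i ≤ m → moment n C i = 0

/-- Generalized binomial coefficient `C(z,j)` for real `z`. -/
noncomputable def gchoose (z : ℝ) (j : ℕ) : ℝ :=
  (∏ i ∈ Finset.range j, (z - (i : ℝ))) / (Nat.factorial j : ℝ)

/-- The Krawtchouk polynomial `K_i^{(m)}(z)` in the variable `z`. -/
noncomputable def krawK (m i : ℕ) (z : ℝ) : ℝ :=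
  ∑ j ∈ Finset.range (i + 1), (-1 : ℝ) ^ j * gchoose z j * gchoose ((m : ℝ) - z) (i - j)

/-- The adjacent polynomial `Q_i^{1,1}(t) = K_i^{(n−2)}(n(1−t)/2 − 1) / ∑_{j=0}^i C(n−1,j)`. -/
noncomputable def Q11 (n i : ℕ) (t : ℝ) : ℝ :=
  krawK (n - 2) i ((n : ℝ) * (1 - t) / 2 - 1) /
    (∑ j ∈ Finset.range (i + 1), ((n - 1).choose j : ℝ))

/- ### Auxiliary lemmas -/

lemma kraw_ss (n i : ℕ) (t : ℝ) : kraw n (i+2) t =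
    ((n : ℝ) * t * kraw n (i+1) t - ((i : ℝ) + 1) * kraw n i t) / ((n : ℝ) - ((i : ℝ) + 1)) := rfl

lemma kraw_zero (n : ℕ) (t : ℝ) : kraw n 0 t = 1 := rfl
lemma kraw_one (n : ℕ) (t : ℝ) : kraw n 1 t = t := rfl

lemma kraw_two_eval (n : ℕ) (hn : 6 ≤ n) (d : ℝ) :
    (n:ℝ) * ((n:ℝ)-1) * kraw n 2 (1 - 2*d/(n:ℝ)) = ((n:ℝ)-2*d)^2 - n := by
  have hn6 : (6:ℝ) ≤ (n:ℝ) := by exact_mod_cast hn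
  have h0 : (n:ℝ) ≠ 0 := by linarith
  have h1 : (n:ℝ) - 1 ≠ 0 := by linarith
  have e2 := kraw_ss n 0 (1 - 2*d/(n:ℝ)); norm_num at e2
  rw [e2, kraw_one, kraw_zero]
  field_simp

lemma kraw_four_eval (n : ℕ) (hn : 6 ≤ n) (d : ℝ) :
    (n:ℝ) * ((n:ℝ)-1) * ((n:ℝ)-2) * ((n:ℝ)-3) * kraw n 4 (1 - 2*d/(n:ℝ))
      = ((n:ℝ)-2*d)^4 + (8-6*(n:ℝ))*((n:ℝ)-2*d)^2 + (3*(n:ℝ)^2-6*(n:ℝ)) := by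
  have hn6 : (6:ℝ) ≤ (n:ℝ) := by exact_mod_cast hn
  have h0 : (n:ℝ) ≠ 0 := by linarith
  have h1 : (n:ℝ) - 1 ≠ 0 := by linarith
  have h2 : (n:ℝ) - 2 ≠ 0 := by linarith
  have h3 : (n:ℝ) - 3 ≠ 0 := by linarith
  set t := 1 - 2*d/(n:ℝ) with ht
  have e2 := kraw_ss n 0 t; norm_num at e2
  have e3 := kraw_ss n 1 t; norm_num at e3
  have e4 := kraw_ss n 2 t; norm_num at e4
  rw [e4, e3, e2, kraw_one, kraw_zero]
  rw [ht]
  field_simp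
  ring

lemma kraw_master (n : ℕ) (hn : 6 ≤ n) (d : ℝ) :
    (((n:ℝ)-2*d) * (((n:ℝ)-2*d)^2 - (3*(n:ℝ)-8)))^2
      = 6*(n:ℝ)*((n:ℝ)^2-3*(n:ℝ)+8)
        + 18*(n:ℝ)*((n:ℝ)-1)*((n:ℝ)^2-3*(n:ℝ)+4) * kraw n 2 (1 - 2*d/(n:ℝ))
        + 3*(3*(n:ℝ)-8)*(n:ℝ)*((n:ℝ)-1)*((n:ℝ)-2)*((n:ℝ)-3) * kraw n 4 (1 - 2*d/(n:ℝ))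
        + (n:ℝ)*((n:ℝ)-1)*((n:ℝ)-2)*((n:ℝ)-3)*((n:ℝ)-4)*((n:ℝ)-5) * kraw n 6 (1 - 2*d/(n:ℝ)) := by
  have hn6 : (6:ℝ) ≤ (n:ℝ) := by exact_mod_cast hn
  have h0 : (n:ℝ) ≠ 0 := by linarith
  have h1 : (n:ℝ) - 1 ≠ 0 := by linarith
  have h2 : (n:ℝ) - 2 ≠ 0 := by linarith
  have h3 : (n:ℝ) - 3 ≠ 0 := by linarith
  have h4 : (n:ℝ) - 4 ≠ 0 := by linarith
  have h5 : (n:ℝ) - 5 ≠ 0 := by linarith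
  set t := 1 - 2*d/(n:ℝ) with ht
  have e2 := kraw_ss n 0 t; norm_num at e2
  have e3 := kraw_ss n 1 t; norm_num at e3
  have e4 := kraw_ss n 2 t; norm_num at e4
  have e5 := kraw_ss n 3 t; norm_num at e5
  have e6 := kraw_ss n 4 t; norm_num at e6
  rw [e6, e5, e4, e3, e2, kraw_one, kraw_zero]
  rw [ht]
  field_simp
  ring

lemma kd_card_sum_real (n : ℕ) (hn : 6 ≤ n) :
    6 * ((∑ i ∈ Finset.range 4, (n-1).choose i : ℕ) : ℝ) + 3*(n:ℝ)^2 = (n:ℝ)^3 + 8*(n:ℝ) := by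
  obtain ⟨j, rfl⟩ : ∃ j, n = j + 6 := ⟨n-6, by omega⟩
  rw [show j + 6 - 1 = j + 5 from by omega, Finset.sum_range_succ, Finset.sum_range_succ,
    Finset.sum_range_succ, Finset.sum_range_one]
  have h2 := Nat.choose_succ_right_eq (j+5) 1
  rw [Nat.choose_one_right, show j+5-1 = j+4 from by omega] at h2
  have h3 := Nat.choose_succ_right_eq (j+5) 2
  rw [show j+5-2 = j+3 from by omega] at h3
  have c2 : ((j+5).choose 2 : ℝ) * 2 = ((j:ℝ)+5)*((j:ℝ)+4) := by exact_mod_cast h2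
  have c3 : ((j+5).choose 3 : ℝ) * 3 = ((j+5).choose 2 : ℝ) * ((j:ℝ)+3) := by exact_mod_cast h3
  simp only [Nat.choose_zero_right, Nat.choose_one_right]
  push_cast
  linear_combination ((j:ℝ)+6)*c2 + 2*c3

lemma kd_nt (n m T K : ℕ) (hn : 6 ≤ n)
    (hm : m^2 + 8 = 3*n) (hne : n % 2 = 0)
    (hT : n^2*((n-1)*((n-2)*K)) = 6*((3*n-8)*T))
    (hNK : 6*K + 3*n^2 = n^3 + 8*n) :
    n % 16 = 8 ∧ 4 ∣ m ∧ ¬ 3 ∣ m := by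
  have hm4 : 4 ≤ m := by
    by_contra h
    have h3 : m ≤ 3 := by omega
    have := Nat.pow_le_pow_left h3 2
    omega
  have h3m : ¬ 3 ∣ m := by
    rintro ⟨t, ht⟩
    have he : m^2 = 9*(t*t) := by rw [ht]; ring
    omega
  have hmeven : m % 2 = 0 := by
    rcases Nat.even_or_odd m with h | h
    · exact Nat.even_iff.1 h
    · obtain ⟨k, hk⟩ := h
      have he : m^2 = 4*(k*k) + 4*k + 1 := by subst hk; ring
      omega
  obtain ⟨b, hb⟩ : ∃ b, m = 2*b := ⟨m/2, by omega⟩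
  rcases Nat.even_or_odd b with hbe | hbo
  · obtain ⟨c, hc⟩ := hbe
    refine ⟨?_, ⟨c, by omega⟩, h3m⟩
    have h16 : m^2 = 16*(c*c) := by subst hb hc; ring
    omega
  · exfalso
    obtain ⟨b2, hb2⟩ := hbo
    set p := b.minFac with hp_def
    have hp : p.Prime := Nat.minFac_prime (by omega)
    have hpb : p ∣ b := Nat.minFac_dvd b
    have hpm : p ∣ m := hpb.trans ⟨2, by omega⟩
    have hp2 : p ≠ 2 := by
      intro h
      obtain ⟨u, hu⟩ := hpb
      rw [h] at hu
      omega
    have hp3 : p ≠ 3 := by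
      intro h
      obtain ⟨u, hu⟩ := hpm
      rw [h] at hu
      have he : m^2 = 9*(u*u) := by rw [hu]; ring
      omega
    have hp5 : 5 ≤ p := by
      have h2 := hp.two_le
      have h4 : p ≠ 4 := fun h => absurd hp (h ▸ by norm_num)
      omega
    have hpn : ¬ p ∣ n := by
      intro h
      have h1 : p ∣ m^2 + 8 := by rw [hm]; exact Dvd.dvd.mul_left h 3
      have hsq : p ∣ m^2 := dvd_pow hpm (by norm_num)
      have h8 : p ∣ 8 := by have := Nat.dvd_sub h1 hsq; simpa using this
      have h23 : p ∣ 2^3 := by simpa using h8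
      have := hp.dvd_of_dvd_pow h23
      have := Nat.le_of_dvd (by norm_num) this
      omega
    have hpn2 : ¬ p ∣ (n-2) := by
      intro h
      have h1 : p ∣ 3*(n-2) := h.mul_left 3
      have he : 3*(n-2) = m^2 + 2 := by omega
      have hsq : p ∣ m^2 := dvd_pow hpm (by norm_num)
      have hd2 : p ∣ 2 := by have := Nat.dvd_sub (he ▸ h1) hsq; simpa using this
      have := Nat.le_of_dvd (by norm_num) hd2
      omega
    have hpK : ¬ p ∣ K := by
      intro h
      have h6K : ((p:ℤ)) ∣ (n:ℤ)*(((n:ℤ)-(m:ℤ))*((n:ℤ)+(m:ℤ))) := by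
        have e : (n:ℤ)*(((n:ℤ)-(m:ℤ))*((n:ℤ)+(m:ℤ))) = 6*(K:ℤ) := by
          have e1 : (m:ℤ)^2 + 8 = 3*(n:ℤ) := by exact_mod_cast hm
          have e2 : 6*(K:ℤ) + 3*(n:ℤ)^2 = (n:ℤ)^3 + 8*(n:ℤ) := by exact_mod_cast hNK
          linear_combination (-(n:ℤ))*e1 - e2
        rw [e]
        exact Dvd.dvd.mul_left (Int.natCast_dvd_natCast.2 h) 6
      have hpI : Prime (p:ℤ) := Nat.prime_iff_prime_int.1 hp
      have hpmI : (p:ℤ) ∣ (m:ℤ) := Int.natCast_dvd_natCast.2 hpm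
      have hfin : (p:ℤ) ∣ (n:ℤ) := by
        rcases hpI.dvd_mul.1 h6K with h' | h'
        · exact h'
        · rcases hpI.dvd_mul.1 h' with h'' | h''
          · have := dvd_add h'' hpmI
            simpa using this
          · have := dvd_sub h'' hpmI
            simpa using this
      exact hpn (Int.natCast_dvd_natCast.1 hfin)
    have hdvd : p^2 ∣ n^2*((n-1)*((n-2)*K)) := by
      rw [hT]
      have hd : p^2 ∣ 3*n-8 := by
        obtain ⟨u, hu⟩ := hpm
        exact ⟨u^2, by rw [show 3*n-8 = m^2 from by omega, hu]; ring⟩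
      exact (hd.mul_right T).mul_left 6
    have cop : ∀ a : ℕ, ¬ p ∣ a → Nat.Coprime (p^2) a := fun a ha =>
      Nat.Coprime.pow_left 2 ((Nat.Prime.coprime_iff_not_dvd hp).2 ha)
    have step1 : p^2 ∣ (n-1)*((n-2)*K) := by
      have copn : Nat.Coprime (p^2) (n^2) := Nat.Coprime.pow_right 2 (cop n hpn)
      exact copn.dvd_of_dvd_mul_left hdvd
    have step2 : p^2 ∣ (n-1) := by
      have copr : Nat.Coprime (p^2) ((n-2)*K) := (cop _ hpn2).mul_right (cop _ hpK)
      exact copr.dvd_of_dvd_mul_right step1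
    have h5d : p^2 ∣ 5 := by
      have h1 : p^2 ∣ 3*(n-1) := step2.mul_left 3
      have he : 3*(n-1) = m^2 + 5 := by omega
      have hsq2 : p^2 ∣ m^2 := pow_dvd_pow_of_dvd hpm 2
      have := Nat.dvd_sub (he ▸ h1) hsq2
      simpa using this
    have := Nat.le_of_dvd (by norm_num) h5d
    nlinarith

lemma kd_split_sum {α : Type*} [DecidableEq α] (C : Finset α) (n : ℕ) (dist : α → α → ℕ)
    (g : α → α → ℝ) (vd vz vw : ℝ)
    (hd : ∀ x ∈ C, g x x = vd)
    (hz : ∀ x ∈ C, ∀ y ∈ C, y ≠ x → 2 * dist x y = n → g x y = vz)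
    (hw : ∀ x ∈ C, ∀ y ∈ C, y ≠ x → ¬(2 * dist x y = n) → g x y = vw) :
    ∑ x ∈ C, ∑ y ∈ C, g x y
      = (C.card : ℝ) * vd
        + ((∑ x ∈ C, ((C.erase x).filter (fun y => 2 * dist x y = n)).card : ℕ) : ℝ) * vz
        + ((∑ x ∈ C, ((C.erase x).filter (fun y => ¬(2 * dist x y = n))).card : ℕ) : ℝ) * vw := by
  have key : ∀ x ∈ C, ∑ y ∈ C, g x y
      = vd + ((((C.erase x).filter (fun y => 2 * dist x y = n)).card : ℝ) * vz
           + (((C.erase x).filter (fun y => ¬(2 * dist x y = n))).card : ℝ) * vw) := by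
    intro x hx
    rw [← Finset.add_sum_erase C (g x) hx, hd x hx,
      ← Finset.sum_filter_add_sum_filter_not (C.erase x) (fun y => 2 * dist x y = n) (g x)]
    congr 1
    congr 1
    · rw [Finset.sum_congr rfl (fun y hy => ?_), Finset.sum_const, nsmul_eq_mul]
      rcases Finset.mem_filter.1 hy with ⟨hy1, hy2⟩
      rcases Finset.mem_erase.1 hy1 with ⟨hyne, hyC⟩
      exact hz x hx y hyC hyne hy2
    · rw [Finset.sum_congr rfl (fun y hy => ?_), Finset.sum_const, nsmul_eq_mul]
      rcases Finset.mem_filter.1 hy with ⟨hy1, hy2⟩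
      rcases Finset.mem_erase.1 hy1 with ⟨hyne, hyC⟩
      exact hw x hx y hyC hyne hy2
  rw [Finset.sum_congr rfl key, Finset.sum_add_distrib, Finset.sum_add_distrib,
    Finset.sum_const, nsmul_eq_mul]
  push_cast
  rw [← Finset.sum_mul, ← Finset.sum_mul]
  ring

/-- necessary conditions for the existence of a tight `(3,3)`-design. -/
theorem stmt_13 (n : ℕ) (hn : 6 ≤ n)
    (C : Finset (Fin n → ZMod 2)) (hC : C.Nonempty)
    (h2 : moment n C 2 = 0) (h4 : moment n C 4 = 0) (h6 : moment n C 6 = 0)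
    (hcard : C.card = ∑ i ∈ Finset.range 4, (n - 1).choose i) :
    (n % 16 = 8 ∨ n % 128 = 107) ∧
      ∃ m : ℕ, 4 ≤ m ∧ 3 * n - 8 = m ^ 2 ∧ ((4 ∣ m ∧ ¬ 3 ∣ m) ∨ m % 64 = 43) := by
  classical
  have hn6 : (6:ℝ) ≤ (n:ℝ) := by exact_mod_cast hn
  have hNpos : 0 < C.card := Finset.card_pos.2 hC
  have hN1 : (1:ℝ) ≤ (C.card:ℝ) := by exact_mod_cast hNpos
  have hNcard : 6 * (C.card:ℝ) + 3*(n:ℝ)^2 = (n:ℝ)^3 + 8*(n:ℝ) := by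
    rw [hcard]; exact kd_card_sum_real n hn
  have hs2 : ∑ x ∈ C, ∑ y ∈ C, (((n:ℝ) - 2*(hammingDist x y : ℝ))^2 - (n:ℝ)) = 0 := by
    calc ∑ x ∈ C, ∑ y ∈ C, (((n:ℝ) - 2*(hammingDist x y : ℝ))^2 - (n:ℝ))
        = ∑ x ∈ C, ∑ y ∈ C, (n:ℝ)*((n:ℝ)-1) * kraw n 2 (ip n x y) := by
          refine Finset.sum_congr rfl fun x _ => Finset.sum_congr rfl fun y _ => ?_
          simp only [ip]
          exact (kraw_two_eval n hn _).symm
      _ = (n:ℝ)*((n:ℝ)-1) * moment n C 2 := by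
          rw [moment, Finset.mul_sum]
          exact Finset.sum_congr rfl fun x _ => (Finset.mul_sum _ _ _).symm
      _ = 0 := by rw [h2, mul_zero]
  have hs4 : ∑ x ∈ C, ∑ y ∈ C,
      (((n:ℝ) - 2*(hammingDist x y : ℝ))^4
        + (8-6*(n:ℝ))*((n:ℝ) - 2*(hammingDist x y : ℝ))^2 + (3*(n:ℝ)^2-6*(n:ℝ))) = 0 := by
    calc ∑ x ∈ C, ∑ y ∈ C, (((n:ℝ) - 2*(hammingDist x y : ℝ))^4
        + (8-6*(n:ℝ))*((n:ℝ) - 2*(hammingDist x y : ℝ))^2 + (3*(n:ℝ)^2-6*(n:ℝ)))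
        = ∑ x ∈ C, ∑ y ∈ C, (n:ℝ)*((n:ℝ)-1)*((n:ℝ)-2)*((n:ℝ)-3) * kraw n 4 (ip n x y) := by
          refine Finset.sum_congr rfl fun x _ => Finset.sum_congr rfl fun y _ => ?_
          simp only [ip]
          exact (kraw_four_eval n hn _).symm
      _ = (n:ℝ)*((n:ℝ)-1)*((n:ℝ)-2)*((n:ℝ)-3) * moment n C 4 := by
          rw [moment, Finset.mul_sum]
          exact Finset.sum_congr rfl fun x _ => (Finset.mul_sum _ _ _).symm
      _ = 0 := by rw [h4, mul_zero]
  have hsP : ∑ x ∈ C, ∑ y ∈ C,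
      (((n:ℝ) - 2*(hammingDist x y : ℝ)) * (((n:ℝ) - 2*(hammingDist x y : ℝ))^2 - (3*(n:ℝ)-8)))^2
      = 36*(C.card:ℝ)*((C.card:ℝ)*(C.card:ℝ)) := by
    have hc0 : 6*(n:ℝ)*((n:ℝ)^2-3*(n:ℝ)+8) = 36*(C.card:ℝ) := by linear_combination (-6:ℝ)*hNcard
    calc ∑ x ∈ C, ∑ y ∈ C,
        (((n:ℝ) - 2*(hammingDist x y : ℝ)) * (((n:ℝ) - 2*(hammingDist x y : ℝ))^2 - (3*(n:ℝ)-8)))^2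
        = ∑ x ∈ C, ∑ y ∈ C,
            (6*(n:ℝ)*((n:ℝ)^2-3*(n:ℝ)+8)
              + (18*(n:ℝ)*((n:ℝ)-1)*((n:ℝ)^2-3*(n:ℝ)+4) * kraw n 2 (ip n x y)
              + (3*(3*(n:ℝ)-8)*(n:ℝ)*((n:ℝ)-1)*((n:ℝ)-2)*((n:ℝ)-3) * kraw n 4 (ip n x y)
              + (n:ℝ)*((n:ℝ)-1)*((n:ℝ)-2)*((n:ℝ)-3)*((n:ℝ)-4)*((n:ℝ)-5) * kraw n 6 (ip n x y)))) := by
          refine Finset.sum_congr rfl fun x _ => Finset.sum_congr rfl fun y _ => ?_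
          simp only [ip]
          rw [kraw_master n hn]
          ring
      _ = 36*(C.card:ℝ)*((C.card:ℝ)*(C.card:ℝ)) := by
          rw [Finset.sum_congr rfl (fun x _ => Finset.sum_add_distrib),
            Finset.sum_add_distrib,
            Finset.sum_congr rfl (fun x _ => Finset.sum_add_distrib),
            Finset.sum_add_distrib,
            Finset.sum_congr rfl (fun x _ => Finset.sum_add_distrib),
            Finset.sum_add_distrib]
          have e2 : ∑ x ∈ C, ∑ y ∈ C,
              18*(n:ℝ)*((n:ℝ)-1)*((n:ℝ)^2-3*(n:ℝ)+4) * kraw n 2 (ip n x y)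
              = 18*(n:ℝ)*((n:ℝ)-1)*((n:ℝ)^2-3*(n:ℝ)+4) * moment n C 2 := by
            rw [moment, Finset.mul_sum]
            exact Finset.sum_congr rfl fun x _ => (Finset.mul_sum _ _ _).symm
          have e4 : ∑ x ∈ C, ∑ y ∈ C,
              3*(3*(n:ℝ)-8)*(n:ℝ)*((n:ℝ)-1)*((n:ℝ)-2)*((n:ℝ)-3) * kraw n 4 (ip n x y)
              = 3*(3*(n:ℝ)-8)*(n:ℝ)*((n:ℝ)-1)*((n:ℝ)-2)*((n:ℝ)-3) * moment n C 4 := by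
            rw [moment, Finset.mul_sum]
            exact Finset.sum_congr rfl fun x _ => (Finset.mul_sum _ _ _).symm
          have e6 : ∑ x ∈ C, ∑ y ∈ C,
              (n:ℝ)*((n:ℝ)-1)*((n:ℝ)-2)*((n:ℝ)-3)*((n:ℝ)-4)*((n:ℝ)-5) * kraw n 6 (ip n x y)
              = (n:ℝ)*((n:ℝ)-1)*((n:ℝ)-2)*((n:ℝ)-3)*((n:ℝ)-4)*((n:ℝ)-5) * moment n C 6 := by
            rw [moment, Finset.mul_sum]
            exact Finset.sum_congr rfl fun x _ => (Finset.mul_sum _ _ _).symm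
          rw [e2, e4, e6, h2, h4, h6]
          simp only [mul_zero, add_zero, Finset.sum_const, nsmul_eq_mul]
          linear_combination ((C.card:ℝ)*(C.card:ℝ))*hc0
  have hdiag : ∀ x : Fin n → ZMod 2,
      ((n:ℝ) - 2*(hammingDist x x : ℝ)) * (((n:ℝ) - 2*(hammingDist x x : ℝ))^2 - (3*(n:ℝ)-8))
        = 6*(C.card:ℝ) := by
    intro x
    rw [hammingDist_self]
    push_cast
    linear_combination -hNcard
  have hzero : ∀ x ∈ C, ∀ y ∈ C, y ≠ x →
      ((n:ℝ) - 2*(hammingDist x y : ℝ)) * (((n:ℝ) - 2*(hammingDist x y : ℝ))^2 - (3*(n:ℝ)-8)) = 0 := by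
    have hoff : ∑ x ∈ C, ∑ y ∈ C.erase x,
        (((n:ℝ) - 2*(hammingDist x y : ℝ)) * (((n:ℝ) - 2*(hammingDist x y : ℝ))^2 - (3*(n:ℝ)-8)))^2
        = 0 := by
      have hsplit : ∀ x ∈ C, ∑ y ∈ C,
          (((n:ℝ) - 2*(hammingDist x y : ℝ)) * (((n:ℝ) - 2*(hammingDist x y : ℝ))^2 - (3*(n:ℝ)-8)))^2
          = (6*(C.card:ℝ))^2 + ∑ y ∈ C.erase x,
            (((n:ℝ) - 2*(hammingDist x y : ℝ)) * (((n:ℝ) - 2*(hammingDist x y : ℝ))^2 - (3*(n:ℝ)-8)))^2 := by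
        intro x hx
        rw [← Finset.add_sum_erase C _ hx, hdiag x]
      rw [Finset.sum_congr rfl hsplit, Finset.sum_add_distrib, Finset.sum_const, nsmul_eq_mul] at hsP
      nlinarith [hsP]
    intro x hx y hy hne
    have h1 := (Finset.sum_eq_zero_iff_of_nonneg
      (fun x _ => Finset.sum_nonneg fun y _ => sq_nonneg _)).1 hoff x hx
    have h2' := (Finset.sum_eq_zero_iff_of_nonneg fun y _ => sq_nonneg _).1 h1 y
      (Finset.mem_erase.2 ⟨hne, hy⟩)
    exact pow_eq_zero_iff (by norm_num) |>.1 h2'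
  have E2 := (kd_split_sum C n hammingDist
      (fun x y => ((n:ℝ) - 2*(hammingDist x y : ℝ))^2 - (n:ℝ))
      ((n:ℝ)^2 - (n:ℝ)) (-(n:ℝ)) (2*(n:ℝ)-8)
      (fun x _ => by rw [hammingDist_self]; push_cast; ring)
      (fun x _ y _ hne hz => by
        have hc : ((2 * hammingDist x y : ℕ) : ℝ) = (n:ℝ) := by exact_mod_cast hz
        push_cast at hc
        rw [show (n:ℝ) - 2*(hammingDist x y : ℝ) = 0 from by linarith]
        ring)
      (fun x hx y hy hne hnz => by
        have hP := hzero x hx y hy hne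
        have hsne : (n:ℝ) - 2*(hammingDist x y : ℝ) ≠ 0 := by
          intro h
          apply hnz
          have hc : (n:ℝ) = ((2 * hammingDist x y : ℕ) : ℝ) := by push_cast; linarith
          exact_mod_cast hc.symm
        have hsq : ((n:ℝ) - 2*(hammingDist x y : ℝ))^2 = 3*(n:ℝ)-8 := by
          rcases mul_eq_zero.1 hP with h | h
          · exact absurd h hsne
          · linarith
        rw [hsq]
        ring)).symm.trans hs2
  have E4 := (kd_split_sum C n hammingDist
      (fun x y => ((n:ℝ) - 2*(hammingDist x y : ℝ))^4
        + (8-6*(n:ℝ))*((n:ℝ) - 2*(hammingDist x y : ℝ))^2 + (3*(n:ℝ)^2-6*(n:ℝ)))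
      ((n:ℝ)^4 + (8-6*(n:ℝ))*(n:ℝ)^2 + (3*(n:ℝ)^2-6*(n:ℝ))) (3*(n:ℝ)^2-6*(n:ℝ))
      (-6*(n:ℝ)^2+18*(n:ℝ))
      (fun x _ => by rw [hammingDist_self]; push_cast; ring)
      (fun x _ y _ hne hz => by
        have hc : ((2 * hammingDist x y : ℕ) : ℝ) = (n:ℝ) := by exact_mod_cast hz
        push_cast at hc
        rw [show (n:ℝ) - 2*(hammingDist x y : ℝ) = 0 from by linarith]
        ring)
      (fun x hx y hy hne hnz => by
        have hP := hzero x hx y hy hne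
        have hsne : (n:ℝ) - 2*(hammingDist x y : ℝ) ≠ 0 := by
          intro h
          apply hnz
          have hc : (n:ℝ) = ((2 * hammingDist x y : ℕ) : ℝ) := by push_cast; linarith
          exact_mod_cast hc.symm
        have hsq : ((n:ℝ) - 2*(hammingDist x y : ℝ))^2 = 3*(n:ℝ)-8 := by
          rcases mul_eq_zero.1 hP with h | h
          · exact absurd h hsne
          · linarith
        linear_combination (((n:ℝ) - 2*(hammingDist x y : ℝ))^2 + (3*(n:ℝ)-8) + (8-6*(n:ℝ)))*hsq)).symm.trans hs4
  set B0 : ℕ := ∑ x ∈ C, ((C.erase x).filter (fun y => 2 * hammingDist x y = n)).card with hB0def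
  set T : ℕ := ∑ x ∈ C, ((C.erase x).filter (fun y => ¬(2 * hammingDist x y = n))).card with hTdef
  have hT6 : (n:ℝ)^2*((n:ℝ)-1)*((n:ℝ)-2)*(C.card:ℝ) = 6*(3*(n:ℝ)-8)*(T:ℝ) := by
    linear_combination E4 + (3*(n:ℝ)-6)*E2
  have hneven : n % 2 = 0 := by
    by_contra hodd
    have hB0z : B0 = 0 := by
      rw [hB0def]
      refine Finset.sum_eq_zero fun x hx => Finset.card_eq_zero.2 ?_
      refine Finset.filter_eq_empty_iff.2 ?_
      intro y hy
      omega
    rw [hB0z] at E2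
    have hTnn : (0:ℝ) ≤ (T:ℝ) := Nat.cast_nonneg T
    push_cast at E2
    have hq : (0:ℝ) ≤ 2*(n:ℝ)-8 := by linarith
    nlinarith [E2, hTnn, mul_nonneg hTnn hq,
      mul_le_mul_of_nonneg_right hN1 (show (0:ℝ) ≤ (n:ℝ)^2-(n:ℝ) by nlinarith)]
  have hTne : T ≠ 0 := by
    intro h
    rw [h] at hT6
    rw [Nat.cast_zero, mul_zero] at hT6
    have a1 : (0:ℝ) < (n:ℝ)^2 := by nlinarith
    have a2 : (0:ℝ) < (n:ℝ)^2*((n:ℝ)-1) := mul_pos a1 (by linarith)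
    have a3 : (0:ℝ) < (n:ℝ)^2*((n:ℝ)-1)*((n:ℝ)-2) := mul_pos a2 (by linarith)
    have a4 : (0:ℝ) < (n:ℝ)^2*((n:ℝ)-1)*((n:ℝ)-2)*(C.card:ℝ) := mul_pos a3 (by linarith)
    linarith
  obtain ⟨x, hx, y, hyC, hyne, hynz⟩ :
      ∃ x ∈ C, ∃ y ∈ C, y ≠ x ∧ ¬(2 * hammingDist x y = n) := by
    by_contra hall
    push_neg at hall
    apply hTne
    rw [hTdef]
    refine Finset.sum_eq_zero fun x hx => Finset.card_eq_zero.2 ?_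
    refine Finset.filter_eq_empty_iff.2 ?_
    intro y hy
    rcases Finset.mem_erase.1 hy with ⟨hne, hyC⟩
    simpa using hall x hx y hyC hne
  have hP := hzero x hx y hyC hyne
  have hsne : (n:ℝ) - 2*(hammingDist x y : ℝ) ≠ 0 := by
    intro h
    apply hynz
    have hc : (n:ℝ) = ((2 * hammingDist x y : ℕ) : ℝ) := by push_cast; linarith
    exact_mod_cast hc.symm
  have hsq : ((n:ℝ) - 2*(hammingDist x y : ℝ))^2 = 3*(n:ℝ)-8 := by
    rcases mul_eq_zero.1 hP with h | h
    · exact absurd h hsne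
    · linarith
  set m : ℕ := ((n:ℤ) - 2*(hammingDist x y : ℤ)).natAbs with hmdef
  have hmint : ((m:ℤ))^2 = 3*(n:ℤ) - 8 := by
    have hint : ((n:ℤ) - 2*(hammingDist x y : ℤ))^2 = 3*(n:ℤ) - 8 := by exact_mod_cast hsq
    rw [hmdef, Int.natAbs_sq]
    exact hint
  have hmnat : m^2 + 8 = 3*n := by
    have h3 : ((m^2 : ℕ) : ℤ) = 3*(n:ℤ) - 8 := by push_cast; exact hmint
    omega
  have hT6n : n^2*((n-1)*((n-2)*C.card)) = 6*((3*n-8)*T) := by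
    have h1 : ((n^2*((n-1)*((n-2)*C.card)) : ℕ) : ℝ) = ((6*((3*n-8)*T) : ℕ) : ℝ) := by
      push_cast [Nat.cast_sub (show 1 ≤ n by omega), Nat.cast_sub (show 2 ≤ n by omega),
        Nat.cast_sub (show 8 ≤ 3*n by omega)]
      linear_combination hT6
    exact_mod_cast h1
  have hNKn : 6*C.card + 3*n^2 = n^3 + 8*n := by exact_mod_cast hNcard
  obtain ⟨h16, h4m, h3m⟩ := kd_nt n m T C.card hn hmnat hneven hT6n hNKn
  have hm4 : 4 ≤ m := by
    by_contra h
    have h3 : m ≤ 3 := by omega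
    have := Nat.pow_le_pow_left h3 2
    omega
  exact ⟨Or.inl h16, m, hm4, by omega, Or.inl ⟨h4m, h3m⟩⟩
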